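/- For every real parameter θ, the bivariate polynomial Ā(τ,σ) = 1/6 − (1/2)ξ₁P₁(σ) + (1/2)ξ₁P₁(τ) + ξ₁ξ₂ P₀(τ)P₂(σ) + ξ₁ξ₂ P₂(τ)P₀(σ) + θ P₁(τ)P₁(σ), where ξ₁ = 1/(2√3) and ξ₂ = 1/(2√15), satisfies simultaneously: (i) the simplifying assumption 𝒞𝒩(2): ∫₀¹ Ā(τ,σ) dσ = τ²/2 for all τ ∈ [0,1]; (ii) the simplifying assumption 𝒟𝒩(2): ∫₀¹ Ā(τ,σ) dτ = σ²/2 − σ + 1/2 for all σ ∈ [0,1]; and (iii) the symplecticity relation Ā(τ,σ) − Ā(σ,τ) = τ − σ for all τ, σ ∈ [0,1]. -/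

import Mathlib

/-!
Statement 15: the one-parameter bivariate polynomial coefficient
`Ā(τ,σ) = 1/6 − (1/2)ξ₁P₁(σ) + (1/2)ξ₁P₁(τ) + ξ₁ξ₂P₀(τ)P₂(σ)
          + ξ₁ξ₂P₂(τ)P₀(σ) + θP₁(τ)P₁(σ)`
satisfies 𝒞𝒩(2), 𝒟𝒩(2) and the symplecticity relation
`Ā(τ,σ) − Ā(σ,τ) = τ − σ`.
-/

open Real MeasureTheory

/-- The normalized shifted Legendre polynomial on `[0,1]`, via the Rodrigues formula. -/
noncomputable def legP (n : ℕ) : ℝ → ℝ :=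
  fun t => (Real.sqrt (2 * n + 1) / n.factorial) * iteratedDeriv n (fun s => (s ^ 2 - s) ^ n) t

/-- `ξ_ι = 1/(2√(4ι²−1))`; in particular `ξ₁ = 1/(2√3)`, `ξ₂ = 1/(2√15)`. -/
noncomputable def xiL (n : ℕ) : ℝ := 1 / (2 * Real.sqrt (4 * (n : ℝ) ^ 2 - 1))

lemma legP0 (t : ℝ) : legP 0 t = 1 := by
  simp [legP]

lemma legP1 (t : ℝ) : legP 1 t = Real.sqrt 3 * (2 * t - 1) := by
  have h : HasDerivAt (fun s : ℝ => (s ^ 2 - s) ^ 1) (2 * t - 1) t := by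
    simp only [pow_one]
    exact ((hasDerivAt_pow 2 t).sub (hasDerivAt_id t)).congr_deriv (by norm_num)
  simp [legP, iteratedDeriv_one, h.deriv]
  norm_num

lemma deriv1 : deriv (fun s : ℝ => (s ^ 2 - s) ^ 2) = fun t => 4 * t ^ 3 - 6 * t ^ 2 + 2 * t := by
  funext t
  have h : HasDerivAt (fun s : ℝ => (s ^ 2 - s) ^ 2) (4 * t ^ 3 - 6 * t ^ 2 + 2 * t) t := by
    have h1 : HasDerivAt (fun s : ℝ => s ^ 2 - s) (2 * t ^ 1 - 1) t := by
      exact ((hasDerivAt_pow 2 t).sub (hasDerivAt_id t)).congr_deriv (by norm_num)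
    have := h1.pow 2
    refine this.congr_deriv ?_
    norm_num
    ring
  exact h.deriv

lemma legP2 (t : ℝ) : legP 2 t = Real.sqrt 5 * (6 * t ^ 2 - 6 * t + 1) := by
  have h : HasDerivAt (fun s : ℝ => 4 * s ^ 3 - 6 * s ^ 2 + 2 * s) (12 * t ^ 2 - 12 * t + 2) t := by
    have h1 := ((hasDerivAt_pow 3 t).const_mul 4).sub ((hasDerivAt_pow 2 t).const_mul 6)
    have h2 := h1.add ((hasDerivAt_id t).const_mul 2)
    refine h2.congr_deriv ?_
    push_cast; ring
  have : iteratedDeriv 2 (fun s : ℝ => (s ^ 2 - s) ^ 2) t = 12 * t ^ 2 - 12 * t + 2 := by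
    rw [iteratedDeriv_succ, iteratedDeriv_one, deriv1, h.deriv]
  simp [legP, this]
  norm_num
  ring

lemma xiL1 : xiL 1 = 1 / (2 * Real.sqrt 3) := by norm_num [xiL]

lemma xiL2 : xiL 2 = 1 / (2 * Real.sqrt 15) := by norm_num [xiL]

lemma k1 : xiL 1 * Real.sqrt 3 = 1 / 2 := by
  rw [xiL1]
  have h3 : Real.sqrt 3 ≠ 0 := by positivity
  field_simp

lemma k2 : xiL 1 * xiL 2 * Real.sqrt 5 = 1 / 12 := by
  rw [xiL1, xiL2, show (15:ℝ) = 3 * 5 by norm_num, Real.sqrt_mul (by norm_num)]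
  have h3 : Real.sqrt 3 ≠ 0 := by positivity
  have h5 : Real.sqrt 5 ≠ 0 := by positivity
  have s3 : Real.sqrt 3 * Real.sqrt 3 = 3 := Real.mul_self_sqrt (by norm_num)
  field_simp
  linear_combination (-4) * s3

lemma k3 : Real.sqrt 3 * Real.sqrt 3 = 3 := Real.mul_self_sqrt (by norm_num)

lemma key (c₂ c₁ c₀ : ℝ) :
    (∫ x in (0:ℝ)..1, (c₂ * x ^ 2 + c₁ * x + c₀)) = c₂ / 3 + c₁ / 2 + c₀ := by
  have h1 : IntervalIntegrable (fun x : ℝ => c₂ * x ^ 2) volume 0 1 :=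
    (Continuous.intervalIntegrable (by continuity) _ _)
  have h2 : IntervalIntegrable (fun x : ℝ => c₁ * x) volume 0 1 :=
    (Continuous.intervalIntegrable (by continuity) _ _)
  have h3 : IntervalIntegrable (fun x : ℝ => (c₀:ℝ)) volume 0 1 :=
    intervalIntegrable_const
  rw [intervalIntegral.integral_add (h1.add h2) h3, intervalIntegral.integral_add h1 h2,
    intervalIntegral.integral_const_mul, intervalIntegral.integral_const_mul,
    integral_pow, integral_id, intervalIntegral.integral_const]
  norm_num
  ring

theorem stmt_15 (θ : ℝ) (Abar : ℝ → ℝ → ℝ)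
    (hA : ∀ τ σ : ℝ, Abar τ σ =
      1 / 6 - (1 / 2) * xiL 1 * legP 1 σ + (1 / 2) * xiL 1 * legP 1 τ
        + xiL 1 * xiL 2 * legP 0 τ * legP 2 σ
        + xiL 1 * xiL 2 * legP 2 τ * legP 0 σ
        + θ * legP 1 τ * legP 1 σ) :
    -- (i) 𝒞𝒩(2)
    (∀ τ ∈ Set.Icc (0:ℝ) 1, (∫ σ in (0:ℝ)..1, Abar τ σ) = τ ^ 2 / 2) ∧
    -- (ii) 𝒟𝒩(2)
    (∀ σ ∈ Set.Icc (0:ℝ) 1, (∫ τ in (0:ℝ)..1, Abar τ σ) = σ ^ 2 / 2 - σ + 1 / 2) ∧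
    -- (iii) symplecticity relation
    (∀ τ ∈ Set.Icc (0:ℝ) 1, ∀ σ ∈ Set.Icc (0:ℝ) 1, Abar τ σ - Abar σ τ = τ - σ) := by
  have hA' : ∀ τ σ : ℝ, Abar τ σ =
      1/6 - (2*σ-1)/4 + (2*τ-1)/4 + (6*σ^2-6*σ+1)/12 + (6*τ^2-6*τ+1)/12
        + 3*θ*(2*τ-1)*(2*σ-1) := by
    intro τ σ
    rw [hA, legP0, legP0, legP1, legP1, legP2, legP2]
    linear_combination ((1/2)*((2*τ-1)-(2*σ-1))) * k1
      + ((6*σ^2-6*σ+1)+(6*τ^2-6*τ+1)) * k2 + (θ*(2*τ-1)*(2*σ-1)) * k3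
  refine ⟨?_, ?_, ?_⟩
  · intro τ _
    rw [show (fun σ => Abar τ σ) = fun σ =>
        ((1/2:ℝ)) * σ^2 + (-1 + 6*θ*(2*τ-1)) * σ
          + (1/6 + 1/4 + (2*τ-1)/4 + 1/12 + (6*τ^2-6*τ+1)/12 - 3*θ*(2*τ-1))
      from funext fun σ => by rw [hA']; ring]
    rw [key]; ring
  · intro σ _
    rw [show (fun τ => Abar τ σ) = fun τ =>
        ((1/2:ℝ)) * τ^2 + (0 + 6*θ*(2*σ-1)) * τ
          + (1/6 - (2*σ-1)/4 - 1/4 + (6*σ^2-6*σ+1)/12 + 1/12 - 3*θ*(2*σ-1))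
      from funext fun τ => by rw [hA']; ring]
    rw [key]; ring
  · intro τ _ σ _
    rw [hA', hA']; ring
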